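/- For each i with 0 ≤ i ≤ 2, the number Γ_i^{[2;2;2]×2} of triple persymmetric matrices of type [2;2;2]×2 over F₂ of rank i equals: 1 if i = 0, 21 if i = 1, and 490 if i = 2. -/

import Mathlib

/-- A `(s+t+u) × k` matrix over `F₂` is triple persymmetric of type `[s; t; u] × k` if
each of its three stacked blocks (of `s`, `t` and `u` rows respectively) is constant
along anti-diagonals. -/
def IsTriplePersymmetric (s t u k : ℕ) (M : Matrix (Fin (s + t + u)) (Fin k) (ZMod 2)) :
    Prop :=
  (∀ (a a' : Fin (s + t + u)) (b b' : Fin k), (a : ℕ) < s → (a' : ℕ) < s →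
    (a : ℕ) + (b : ℕ) = (a' : ℕ) + (b' : ℕ) → M a b = M a' b') ∧
  (∀ (a a' : Fin (s + t + u)) (b b' : Fin k),
    s ≤ (a : ℕ) → (a : ℕ) < s + t → s ≤ (a' : ℕ) → (a' : ℕ) < s + t →
    (a : ℕ) + (b : ℕ) = (a' : ℕ) + (b' : ℕ) → M a b = M a' b') ∧
  (∀ (a a' : Fin (s + t + u)) (b b' : Fin k), s + t ≤ (a : ℕ) → s + t ≤ (a' : ℕ) →
    (a : ℕ) + (b : ℕ) = (a' : ℕ) + (b' : ℕ) → M a b = M a' b')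

/-- `triplePersymRankCount s t u k i` is the number of triple persymmetric matrices of
type `[s; t; u] × k` over `F₂` of rank `i`. -/
noncomputable def triplePersymRankCount (s t u k i : ℕ) : ℕ :=
  Nat.card {M : Matrix (Fin (s + t + u)) (Fin k) (ZMod 2) //
    IsTriplePersymmetric s t u k M ∧ M.rank = i}


open Module Submodule Matrix

abbrev F2V := Fin 6 → ZMod 2

def crank (M : Matrix (Fin 6) (Fin 2) (ZMod 2)) : ℕ :=
  if M = 0 then 0
  else if (∀ i, M i 0 = 0) ∨ (∀ i, M i 1 = 0) ∨ (∀ i, M i 0 = M i 1) then 1 else 2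

lemma range_Mt (M : Matrix (Fin 6) (Fin 2) (ZMod 2)) : Mᵀ = ![Mᵀ 0, Mᵀ 1] := by
  funext i; fin_cases i <;> rfl

lemma cols_zero {M : Matrix (Fin 6) (Fin 2) (ZMod 2)} (h0 : ∀ i, M i 0 = 0)
    (h1 : ∀ i, M i 1 = 0) : M = 0 := by
  ext i j; fin_cases j
  · exact h0 i
  · exact h1 i

theorem rank_eq_crank (M : Matrix (Fin 6) (Fin 2) (ZMod 2)) : M.rank = crank M := by
  unfold crank
  split_ifs with h0 h1
  · rw [h0, Matrix.rank_zero]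
  · have rp : ∀ x y : F2V, Set.range ![x, y] = {x, y} := by
      intro x y; ext v
      simp [Fin.exists_fin_two, or_comm]
    rw [Matrix.rank_eq_finrank_span_cols, Matrix.col_def, range_Mt, rp]
    rcases h1 with h | h | h
    · have e0 : Mᵀ 0 = 0 := funext fun i => h i
      have hn : Mᵀ 1 ≠ 0 := fun hz => h0 (cols_zero h (fun i => congrFun hz i))
      rw [e0, span_insert_zero, finrank_span_singleton hn]
    · have e1 : Mᵀ 1 = 0 := funext fun i => h i
      have hn : Mᵀ 0 ≠ 0 := fun hz => h0 (cols_zero (fun i => congrFun hz i) h)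
      rw [e1, Set.pair_comm, span_insert_zero, finrank_span_singleton hn]
    · have e : Mᵀ 0 = Mᵀ 1 := funext fun i => h i
      have hn : Mᵀ 0 ≠ 0 := fun hz =>
        h0 (cols_zero (fun i => congrFun hz i) (fun i => (h i).symm.trans (congrFun hz i)))
      rw [← e, Set.pair_eq_singleton, finrank_span_singleton hn]
  · push_neg at h1
    obtain ⟨ha, hb, hc⟩ := h1
    have key : ∀ a b : ZMod 2, a + b = 0 → a = b := by decide
    have hc0 : Mᵀ 0 ≠ 0 := fun h => by
      obtain ⟨i, hi⟩ := ha; exact hi (congrFun h i)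
    have hc1 : Mᵀ 1 ≠ 0 := fun h => by
      obtain ⟨i, hi⟩ := hb; exact hi (congrFun h i)
    have hne : Mᵀ 0 ≠ Mᵀ 1 := fun h => by
      obtain ⟨i, hi⟩ := hc; exact hi (congrFun h i)
    have li : LinearIndependent (ZMod 2) ![Mᵀ 0, Mᵀ 1] := by
      rw [LinearIndependent.pair_iff]
      intro s t hst
      have h01 : ∀ a : ZMod 2, a = 0 ∨ a = 1 := by decide
      rcases h01 s with rfl | rfl <;> rcases h01 t with rfl | rfl
      · exact ⟨rfl, rfl⟩
      · rw [zero_smul, one_smul, zero_add] at hst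
        exact absurd hst hc1
      · rw [one_smul, zero_smul, add_zero] at hst
        exact absurd hst hc0
      · rw [one_smul, one_smul] at hst
        exact absurd (funext fun i => key _ _ (congrFun hst i)) hne
    rw [Matrix.rank_eq_finrank_span_cols, Matrix.col_def, range_Mt, finrank_span_eq_card li,
      Fintype.card_fin]

abbrev T3 := (Fin 3 → ZMod 2) × (Fin 3 → ZMod 2) × (Fin 3 → ZMod 2)

def mk3 (v : T3) : Matrix (Fin 6) (Fin 2) (ZMod 2) :=
  !![v.1 0, v.1 1; v.1 1, v.1 2; v.2.1 0, v.2.1 1; v.2.1 1, v.2.1 2;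
     v.2.2 0, v.2.2 1; v.2.2 1, v.2.2 2]

def param3 (M : Matrix (Fin 6) (Fin 2) (ZMod 2)) : T3 :=
  (![M 0 0, M 0 1, M 1 1], ![M 2 0, M 2 1, M 3 1], ![M 4 0, M 4 1, M 5 1])

lemma mk3_persym (v : T3) : IsTriplePersymmetric 2 2 2 2 (mk3 v) := by
  refine ⟨?_, ?_, ?_⟩ <;>
  · intro a a' b b'
    fin_cases a <;> fin_cases a' <;> fin_cases b <;> fin_cases b' <;>
      intros <;> first | rfl | simp_all

lemma param3_mk3 (v : T3) : param3 (mk3 v) = v := by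
  obtain ⟨a, b, c⟩ := v
  refine Prod.ext ?_ (Prod.ext ?_ ?_) <;>
  · funext i; fin_cases i <;> rfl

lemma mk3_param3 (M : Matrix (Fin 6) (Fin 2) (ZMod 2))
    (h : IsTriplePersymmetric 2 2 2 2 M) : mk3 (param3 M) = M := by
  obtain ⟨h1, h2, h3⟩ := h
  funext i j
  fin_cases i <;> fin_cases j <;>
    first
      | rfl
      | exact h1 0 1 1 0 (by decide) (by decide) (by decide)
      | exact h2 2 3 1 0 (by decide) (by decide) (by decide) (by decide) (by decide)
      | exact h3 4 5 1 0 (by decide) (by decide) (by decide)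

def rankEquiv (i : ℕ) :
    {M : Matrix (Fin 6) (Fin 2) (ZMod 2) //
      IsTriplePersymmetric 2 2 2 2 M ∧ crank M = i} ≃ {v : T3 // crank (mk3 v) = i} where
  toFun M := ⟨param3 M.1, by rw [mk3_param3 M.1 M.2.1]; exact M.2.2⟩
  invFun v := ⟨mk3 v.1, mk3_persym v.1, v.2⟩
  left_inv M := Subtype.ext (mk3_param3 M.1 M.2.1)
  right_inv v := Subtype.ext (param3_mk3 v.1)


lemma count_eq (i : ℕ) :
    triplePersymRankCount 2 2 2 2 i = Fintype.card {v : T3 // crank (mk3 v) = i} := by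
  rw [triplePersymRankCount,
    Nat.card_congr ((Equiv.subtypeEquivRight
      (fun M => by rw [rank_eq_crank M])).trans (rankEquiv i)),
    Nat.card_eq_fintype_card]

set_option maxRecDepth 100000 in
set_option maxHeartbeats 2000000 in
theorem triplePersym_two_two_two_two :
    triplePersymRankCount 2 2 2 2 0 = 1 ∧
    triplePersymRankCount 2 2 2 2 1 = 21 ∧
    triplePersymRankCount 2 2 2 2 2 = 490 := by
  refine ⟨?_, ?_, ?_⟩ <;> rw [count_eq] <;> decide
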